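/- Let N be a Nijenhuis operator on a pre-Lie algebra (g, ·). Then for all natural numbers k, l, the pre-Lie structures ·_{N^k} and ·_{N^l} are compatible: any linear combination a·_{N^k} + b·_{N^l} is again a pre-Lie multiplication on g. -/
import Mathlib


def PreLieFn {g : Type*} [AddCommGroup g] (m : g → g → g) : Prop :=
  ∀ x y z : g, m (m x y) z - m x (m y z) = m (m y x) z - m y (m x z)

def NijFn {g : Type*} [AddCommGroup g] (m : g → g → g) (N : g → g) : Prop :=
  ∀ x y : g, m (N x) (N y) = N (m (N x) y + m x (N y) - N (m x y))

def deform {g : Type*} [AddCommGroup g] (m : g → g → g) (N : g → g) : g → g → g :=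
  fun x y => m (N x) y + m x (N y) - N (m x y)

section Aux

variable {K g : Type*} [Field K] [AddCommGroup g] [Module K g]
variable (m : g →ₗ[K] g →ₗ[K] g) (N : Module.End K g)

private lemma pcomm (n : ℕ) (u : g) : (N ^ n) (N u) = N ((N ^ n) u) := by
  rw [← Module.End.mul_apply, ← pow_succ, pow_succ', Module.End.mul_apply]

private lemma tlem (hN : NijFn (fun x y => m x y) N) :
    ∀ j k : ℕ, ∀ x y : g,
      m ((N ^ j) x) ((N ^ k) y) + m ((N ^ k) x) ((N ^ j) y) =
        (N ^ j) (m ((N ^ k) x) y + m x ((N ^ k) y)) +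
          (N ^ k) (m ((N ^ j) x) y + m x ((N ^ j) y)) -
          (N ^ j) ((N ^ k) (m x y)) - (N ^ j) ((N ^ k) (m x y)) := by
  have hN' : ∀ x y : g, m (N x) (N y) = N (m (N x) y + m x (N y) - N (m x y)) := hN
  intro j
  induction j with
  | zero => intro k x y; simp only [pow_zero, Module.End.one_apply, map_add]; abel
  | succ j ihj =>
    intro k
    induction k with
    | zero => intro x y; simp only [pow_zero, Module.End.one_apply, map_add]; abel
    | succ k ihk =>
      intro x y
      have e1 := ihk x y
      have e2 := ihj (k + 1) x y
      have e3 := ihj k x y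
      simp only [pow_succ', Module.End.mul_apply] at e1 e2 e3 ⊢
      rw [hN' ((N ^ j) x) ((N ^ k) y), hN' ((N ^ k) x) ((N ^ j) y)]
      rw [eq_sub_of_add_eq e1, eq_sub_of_add_eq e2, eq_sub_of_add_eq e3]
      simp only [map_add, map_sub, pcomm]
      abel

private lemma diag (hN : NijFn (fun x y => m x y) N) :
    ∀ k : ℕ, ∀ x y : g,
      m ((N ^ k) x) ((N ^ k) y) =
        (N ^ k) (m ((N ^ k) x) y + m x ((N ^ k) y) - (N ^ k) (m x y)) := by
  have hN' : ∀ x y : g, m (N x) (N y) = N (m (N x) y + m x (N y) - N (m x y)) := hN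
  intro k
  induction k with
  | zero => intro x y; simp only [pow_zero, Module.End.one_apply]; abel
  | succ k ih =>
    intro x y
    have e1 := tlem m N hN (k + 1) k x y
    simp only [pow_succ', Module.End.mul_apply] at e1 ⊢
    rw [hN' ((N ^ k) x) ((N ^ k) y), eq_sub_of_add_eq e1, ih x y]
    simp only [map_add, map_sub, pcomm]
    abel

private lemma nijP (hN : NijFn (fun x y => m x y) N) (k l : ℕ) (a b : K) :
    NijFn (fun x y => m x y) ⇑(a • N ^ k + b • N ^ l) := by
  intro x y
  have d1 := diag m N hN k x y
  have d2 := diag m N hN l x y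
  have ct := eq_sub_of_add_eq (tlem m N hN k l x y)
  have comm : ∀ u : g, (N ^ l) ((N ^ k) u) = (N ^ k) ((N ^ l) u) := fun u => by
    simpa [Module.End.mul_apply] using LinearMap.congr_fun (pow_mul_comm N l k) u
  simp only [LinearMap.add_apply, LinearMap.smul_apply, map_add, map_smul, smul_add,
    smul_sub]
  rw [d1, d2, ct]
  simp only [map_add, map_sub, map_smul, smul_add, smul_sub, comm]
  module

private lemma cform (P : Module.End K g) (hP : NijFn (fun x y => m x y) P) (x y z : g) :
    deform (fun x y => m x y) (⇑P) (deform (fun x y => m x y) (⇑P) x y) z -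
      deform (fun x y => m x y) (⇑P) x (deform (fun x y => m x y) (⇑P) y z) =
    (m (m (P x) (P y)) z - m (P x) (m (P y) z)) +
      (m (m (P x) y) (P z) - m (P x) (m y (P z))) +
      (m (m x (P y)) (P z) - m x (m (P y) (P z))) -
      P (m (m (P x) y) z - m (P x) (m y z)) -
      P (m (m x (P y)) z - m x (m (P y) z)) -
      P (m (m x y) (P z) - m x (m y (P z))) +
      P (P (m (m x y) z - m x (m y z))) := by
  have hP' : ∀ u v : g, m (P u) (P v) = P (m (P u) v + m u (P v) - P (m u v)) := hP
  simp only [deform]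
  rw [← hP' x y, ← hP' y z]
  simp only [map_add, map_sub, LinearMap.add_apply, LinearMap.sub_apply]
  rw [hP' (m x y) z, hP' x (m y z)]
  simp only [map_add, map_sub]
  abel

private lemma deform_prelie (P : Module.End K g) (hm : PreLieFn (fun x y => m x y))
    (hP : NijFn (fun x y => m x y) P) :
    PreLieFn (deform (fun x y => m x y) ⇑P) := by
  intro x y z
  have hm' : ∀ u v w : g,
      m (m u v) w - m u (m v w) = m (m v u) w - m v (m u w) := hm
  rw [cform m P hP x y z, cform m P hP y x z,
    hm' (P x) (P y) z, hm' (P x) y (P z), hm' x (P y) (P z),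
    hm' (P x) y z, hm' x (P y) z, hm' x y (P z), hm' x y z]
  abel

end Aux

/-- the deformed pre-Lie structures `·_{N^k}` and `·_{N^l}` are
compatible: any linear combination is again a pre-Lie multiplication. -/
theorem power_deform_compatible {K g : Type*} [Field K] [AddCommGroup g] [Module K g]
    (m : g →ₗ[K] g →ₗ[K] g) (hm : PreLieFn (fun x y => m x y))
    (N : Module.End K g) (hN : NijFn (fun x y => m x y) N) :
    ∀ (k l : ℕ) (a b : K),
      PreLieFn (fun x y : g =>
        a • deform (fun x y => m x y) (fun a : g => (N ^ k) a) x y +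
        b • deform (fun x y => m x y) (fun a : g => (N ^ l) a) x y) := by
  intro k l a b
  have key : (fun x y : g =>
      a • deform (fun x y => m x y) (fun a : g => (N ^ k) a) x y +
      b • deform (fun x y => m x y) (fun a : g => (N ^ l) a) x y) =
      deform (fun x y => m x y) ⇑(a • N ^ k + b • N ^ l) := by
    funext x y
    simp only [deform, LinearMap.add_apply, LinearMap.smul_apply, map_add, map_smul,
      smul_add, smul_sub]
    module
  rw [key]
  exact deform_prelie m (a • N ^ k + b • N ^ l) hm (nijP m N hN k l a b)
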